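/- Let m ∈ ℝ, σ > 0, r > 0, x > 0, S > 0 and set q := √(m² + 2rσ²). Then ∫_0^S e^{−ru}·(x/(σ·u^{3/2}))·φ((x+mu)/(σ√u)) du = exp(−x(m+q)/σ²)·(1 − Φ((x − qS)/(σ√S))) + exp(−x(m−q)/σ²)·(1 − Φ((x + qS)/(σ√S))). Equivalently, with I(x) := ∫_0^S e^{−ru}·∂/∂u(1 − π(u,x)) du, one has I(x) = exp(−x(m+q)/σ²)·(Φ((x − qS)/(σ√S)) − 1) + exp(−x(m−q)/σ²)·(Φ((x + qS)/(σ√S)) − 1). -/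

import Mathlib

open MeasureTheory Real Set
open Filter Topology

/-- The standard normal density. -/
noncomputable def phi (x : ℝ) : ℝ := (Real.sqrt (2 * Real.pi))⁻¹ * Real.exp (-x ^ 2 / 2)

/-- The standard normal cumulative distribution function. -/
noncomputable def Phi (x : ℝ) : ℝ := ∫ u in Set.Iio x, phi u

lemma continuous_phi : Continuous phi := by
  unfold phi; fun_prop

lemma exp_sq_eq : (fun u : ℝ => Real.exp (-u ^ 2 / 2)) = (fun u => Real.exp (-(1/2) * u ^ 2)) := by
  funext u; congr 1; ring

lemma integrable_phi : Integrable phi := by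
  have h : Integrable (fun u : ℝ => Real.exp (-(1/2) * u ^ 2)) := integrable_exp_neg_mul_sq (by norm_num)
  unfold phi
  refine Integrable.const_mul ?_ _
  have := congrFun exp_sq_eq
  exact h.congr (Eventually.of_forall fun u => (this u).symm)

lemma integral_phi : ∫ u, phi u = 1 := by
  unfold phi
  rw [integral_const_mul]
  rw [exp_sq_eq, integral_gaussian]
  rw [show Real.pi / (1/2) = 2 * Real.pi by ring]
  exact inv_mul_cancel₀ (ne_of_gt (Real.sqrt_pos.2 (by positivity)))

lemma Phi_eq (t : ℝ) : Phi t = Phi 0 + ∫ u in (0:ℝ)..t, phi u := by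
  unfold Phi
  have h : ∀ s : ℝ, ∫ u in Set.Iio s, phi u = ∫ u in Set.Iic s, phi u :=
    fun s => setIntegral_congr_set Iio_ae_eq_Iic
  rw [h, h, ← intervalIntegral.integral_Iic_sub_Iic integrable_phi.integrableOn integrable_phi.integrableOn]
  ring

lemma hasDerivAt_Phi (t : ℝ) : HasDerivAt Phi (phi t) t := by
  have heq : Phi = fun s => Phi 0 + ∫ u in (0:ℝ)..s, phi u := funext Phi_eq
  rw [heq]
  exact (intervalIntegral.integral_hasDerivAt_right
    (integrable_phi.intervalIntegrable)
    (continuous_phi.stronglyMeasurable.stronglyMeasurableAtFilter)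
    continuous_phi.continuousAt).const_add _

lemma tendsto_Phi_atTop : Tendsto Phi atTop (𝓝 1) := by
  have h := (MeasureTheory.aecover_Iio (tendsto_id : Tendsto (id : ℝ → ℝ) atTop atTop)).integral_tendsto_of_countably_generated integrable_phi
  rw [integral_phi] at h
  exact h

lemma hasDerivAt_g (σ x c u : ℝ) (hσ : 0 < σ) (hu : 0 < u) :
    HasDerivAt (fun v => (x + c*v)/(σ*Real.sqrt v)) ((c*u - x)/(2*σ*(u*Real.sqrt u))) u := by
  have hsu : 0 < Real.sqrt u := Real.sqrt_pos.2 hu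
  have hnum : HasDerivAt (fun v : ℝ => x + c*v) c u := by
    simpa using ((hasDerivAt_id u).const_mul c).const_add x
  have hden : HasDerivAt (fun v : ℝ => σ * Real.sqrt v) (σ * (1/(2*Real.sqrt u))) u :=
    (Real.hasDerivAt_sqrt hu.ne').const_mul σ
  have h := hnum.div hden (by positivity)
  refine h.congr_deriv ?_
  symm
  have hss : Real.sqrt u * Real.sqrt u = u := Real.mul_self_sqrt hu.le
  field_simp
  linear_combination (-(c*u + x)) * hss

lemma exp_key (m σ r x c u : ℝ) (hσ : 0 < σ) (hu : 0 < u)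
    (hc2 : c^2 = m^2 + 2*r*σ^2) :
    Real.exp (-x*(m - c)/σ^2) * phi ((x + c*u)/(σ*Real.sqrt u))
      = Real.exp (-r*u) * phi ((x + m*u)/(σ*Real.sqrt u)) := by
  unfold phi
  have hss : Real.sqrt u ^ 2 = u := Real.sq_sqrt hu.le
  have hsu : 0 < Real.sqrt u := Real.sqrt_pos.2 hu
  have hexp : -x*(m - c)/σ^2 + -((x + c*u)/(σ*Real.sqrt u))^2/2
      = -r*u + -((x + m*u)/(σ*Real.sqrt u))^2/2 := by
    rw [div_pow, div_pow, mul_pow, hss]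
    field_simp
    linear_combination (-u^2) * hc2
  calc Real.exp (-x*(m - c)/σ^2) * ((Real.sqrt (2*Real.pi))⁻¹ * Real.exp (-((x + c*u)/(σ*Real.sqrt u))^2/2))
      = (Real.sqrt (2*Real.pi))⁻¹ * Real.exp (-x*(m - c)/σ^2 + -((x + c*u)/(σ*Real.sqrt u))^2/2) := by
        rw [Real.exp_add]; ring
    _ = (Real.sqrt (2*Real.pi))⁻¹ * Real.exp (-r*u + -((x + m*u)/(σ*Real.sqrt u))^2/2) := by rw [hexp]
    _ = Real.exp (-r*u) * ((Real.sqrt (2*Real.pi))⁻¹ * Real.exp (-((x + m*u)/(σ*Real.sqrt u))^2/2)) := by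
        rw [Real.exp_add]; ring

lemma tendsto_arg_atTop (σ x c : ℝ) (hσ : 0 < σ) (hx : 0 < x) :
    Tendsto (fun u => (x + c*u)/(σ*Real.sqrt u)) (𝓝[>] (0:ℝ)) atTop := by
  have hnum : Tendsto (fun u : ℝ => x + c*u) (𝓝[>] 0) (𝓝 x) := by
    have : Tendsto (fun u : ℝ => x + c*u) (𝓝 0) (𝓝 (x + c*0)) :=
      (continuous_const.add (continuous_const.mul continuous_id)).tendsto 0
    simpa using this.mono_left nhdsWithin_le_nhds
  have hden : Tendsto (fun u : ℝ => (σ*Real.sqrt u)⁻¹) (𝓝[>] 0) atTop := by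
    apply tendsto_inv_nhdsGT_zero.comp
    apply tendsto_nhdsWithin_of_tendsto_nhds_of_eventually_within
    · have : Tendsto (fun u : ℝ => σ * Real.sqrt u) (𝓝 0) (𝓝 (σ * Real.sqrt 0)) :=
        (continuous_const.mul Real.continuous_sqrt).tendsto 0
      simpa using this.mono_left nhdsWithin_le_nhds
    · filter_upwards [self_mem_nhdsWithin] with u hu
      have : (0:ℝ) < u := hu
      exact mem_Ioi.2 (by positivity)
  simpa [div_eq_mul_inv] using Filter.Tendsto.pos_mul_atTop hx hnum hden

/-- Let `m ∈ ℝ`, `σ > 0`, `r > 0`, `x > 0`, `S > 0` and set `q := √(m² + 2rσ²)`. Then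
`∫_0^S e^{−ru}·(x/(σ·u^{3/2}))·φ((x+mu)/(σ√u)) du
  = exp(−x(m+q)/σ²)·(1 − Φ((x − qS)/(σ√S))) + exp(−x(m−q)/σ²)·(1 − Φ((x + qS)/(σ√S)))`. -/
theorem stmt_3 (m σ r x S : ℝ) (hσ : 0 < σ) (hr : 0 < r) (hx : 0 < x) (hS : 0 < S)
    (q : ℝ) (hq : q = Real.sqrt (m ^ 2 + 2 * r * σ ^ 2)) :
    (∫ u in (0:ℝ)..S,
        Real.exp (-r * u) * (x / (σ * u ^ ((3 : ℝ) / 2))) * phi ((x + m * u) / (σ * Real.sqrt u)))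
      = Real.exp (-x * (m + q) / σ ^ 2) * (1 - Phi ((x - q * S) / (σ * Real.sqrt S)))
        + Real.exp (-x * (m - q) / σ ^ 2) * (1 - Phi ((x + q * S) / (σ * Real.sqrt S))) := by
  have hq2 : q^2 = m^2 + 2*r*σ^2 := by
    rw [hq]; exact Real.sq_sqrt (by positivity)
  have hqn2 : (-q)^2 = m^2 + 2*r*σ^2 := by rw [neg_pow]; simpa using hq2
  have hint : IntervalIntegrable
      (fun u => Real.exp (-r * u) * (x / (σ * u ^ ((3 : ℝ) / 2))) * phi ((x + m * u) / (σ * Real.sqrt u)))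
      volume 0 S := by
    rw [intervalIntegrable_iff_integrableOn_Ioc_of_le hS.le]
    set c : ℝ := x^2/(2*σ^2) with hc
    have hc0 : 0 < c := by positivity
    have hcont : ContinuousOn (fun u : ℝ =>
        Real.exp (-r * u) * (x / (σ * u ^ ((3:ℝ)/2))) * phi ((x + m*u)/(σ*Real.sqrt u))) (Ioc 0 S) := by
      apply ContinuousOn.mul
      apply ContinuousOn.mul
      · fun_prop
      · apply ContinuousOn.div continuousOn_const
        · exact continuousOn_const.mul (continuousOn_id.rpow_const fun u hu => Or.inr (by norm_num))
        · intro u hu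
          have h1 : (0:ℝ) < u := hu.1
          positivity
      · apply continuous_phi.comp_continuousOn
        apply ContinuousOn.div
        · fun_prop
        · fun_prop
        · intro u hu
          have h1 : (0:ℝ) < u := hu.1
          positivity
    refine Integrable.mono' (integrable_const
        ((Real.sqrt (2*Real.pi))⁻¹ * Real.exp (x*|m|/σ^2) * (4*x/(σ*c^2)) * Real.sqrt S))
      (hcont.aestronglyMeasurable measurableSet_Ioc) ?_
    rw [ae_restrict_iff' measurableSet_Ioc]
    filter_upwards with u hu
    obtain ⟨hu0, huS⟩ := hu
    have hsu : 0 < Real.sqrt u := Real.sqrt_pos.2 hu0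
    have h32 : u ^ ((3:ℝ)/2) = u * Real.sqrt u := by
      rw [show ((3:ℝ)/2) = 1 + 1/2 by norm_num, Real.rpow_add hu0, Real.rpow_one,
        ← Real.sqrt_eq_rpow]
    have hexp_bound : Real.exp (-((x+m*u)/(σ*Real.sqrt u))^2/2)
        ≤ Real.exp (x*|m|/σ^2) * (4*u^2/c^2) := by
      have harg : -((x+m*u)/(σ*Real.sqrt u))^2/2 = -((x+m*u)^2/(2*(σ^2*u))) := by
        rw [div_pow, mul_pow, Real.sq_sqrt hu0.le]
        ring
      have h1 : x^2 - 2*x*|m| * u ≤ (x+m*u)^2 := by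
        nlinarith [mul_le_mul_of_nonneg_right (neg_abs_le m) (mul_nonneg hx.le hu0.le),
          sq_nonneg (m*u)]
      have hD : (0:ℝ) < 2*(σ^2*u) := by positivity
      have h2 : -((x+m*u)^2/(2*(σ^2*u))) ≤ x*|m|/σ^2 - c/u := by
        have heq : x*|m|/σ^2 - c/u = (-(x^2 - 2*x*|m| * u))/(2*(σ^2*u)) := by
          rw [hc]; field_simp; ring
        rw [heq, ← neg_div, div_le_div_iff_of_pos_right hD]
        exact neg_le_neg h1
      calc Real.exp (-((x+m*u)/(σ*Real.sqrt u))^2/2)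
          = Real.exp (-((x+m*u)^2/(2*(σ^2*u)))) := by rw [harg]
        _ ≤ Real.exp (x*|m|/σ^2 - c/u) := Real.exp_le_exp.2 h2
        _ = Real.exp (x*|m|/σ^2) * Real.exp (-(c/u)) := by
            rw [sub_eq_add_neg, Real.exp_add]
        _ ≤ Real.exp (x*|m|/σ^2) * (4*u^2/c^2) := by
            have ht : 0 < c/u := by positivity
            have hmul : Real.exp (c/u/2) * Real.exp (c/u/2) = Real.exp (c/u) := by
              rw [← Real.exp_add]; ring_nf
            have hsq : (c/u)^2/4 ≤ Real.exp (c/u) := by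
              nlinarith [Real.add_one_le_exp (c/u/2), Real.exp_pos (c/u/2)]
            have hinv : Real.exp (-(c/u)) ≤ ((c/u)^2/4)⁻¹ := by
              rw [Real.exp_neg]
              exact inv_anti₀ (by positivity) hsq
            have heq2 : ((c/u)^2/4)⁻¹ = 4*u^2/c^2 := by
              field_simp
            exact mul_le_mul_of_nonneg_left (heq2 ▸ hinv) (Real.exp_pos _).le
    have hss : Real.sqrt u * Real.sqrt u = u := Real.mul_self_sqrt hu0.le
    have hnn : 0 ≤ Real.exp (-r * u) * (x / (σ * u ^ ((3:ℝ)/2))) * phi ((x + m*u)/(σ*Real.sqrt u)) := by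
      unfold phi
      positivity
    rw [Real.norm_eq_abs, abs_of_nonneg hnn]
    calc Real.exp (-r * u) * (x / (σ * u ^ ((3:ℝ)/2))) * phi ((x + m*u)/(σ*Real.sqrt u))
        = Real.exp (-r * u) * (x / (σ * (u * Real.sqrt u)))
            * ((Real.sqrt (2*Real.pi))⁻¹ * Real.exp (-((x+m*u)/(σ*Real.sqrt u))^2/2)) := by
          rw [h32, phi]
      _ ≤ 1 * (x / (σ * (u * Real.sqrt u)))
            * ((Real.sqrt (2*Real.pi))⁻¹ * (Real.exp (x*|m|/σ^2) * (4*u^2/c^2))) := by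
          gcongr
          · exact Real.exp_le_one_iff.2 (by nlinarith)
      _ = (Real.sqrt (2*Real.pi))⁻¹ * Real.exp (x*|m|/σ^2) * (4*x/(σ*c^2)) * Real.sqrt u := by
          have hmid : ∀ K Ex : ℝ, K ≠ 0 →
              1 * (x / (σ * (u * Real.sqrt u))) * (K⁻¹ * (Ex * (4*u^2/c^2)))
                = K⁻¹ * Ex * (4*x/(σ*c^2)) * Real.sqrt u := by
            intro K Ex hK
            have h2 : u^2 = u * (Real.sqrt u * Real.sqrt u) := by rw [hss]; ring
            rw [h2]
            have hp : Real.sqrt u ^ 2 = u := Real.sq_sqrt hu0.le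
            field_simp
          exact hmid _ _ (by positivity)
      _ ≤ (Real.sqrt (2*Real.pi))⁻¹ * Real.exp (x*|m|/σ^2) * (4*x/(σ*c^2)) * Real.sqrt S := by
          gcongr
  have hFTC : (∫ u in (0:ℝ)..S,
        Real.exp (-r * u) * (x / (σ * u ^ ((3 : ℝ) / 2))) * phi ((x + m * u) / (σ * Real.sqrt u)))
      = (Real.exp (-x*(m+q)/σ^2) * (1 - Phi ((x + -q*S)/(σ*Real.sqrt S)))
          + Real.exp (-x*(m-q)/σ^2) * (1 - Phi ((x + q*S)/(σ*Real.sqrt S)))) - 0 := by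
    apply intervalIntegral.integral_eq_sub_of_hasDerivAt_of_tendsto
      (f := fun v => Real.exp (-x*(m+q)/σ^2) * (1 - Phi ((x + -q*v)/(σ*Real.sqrt v)))
          + Real.exp (-x*(m-q)/σ^2) * (1 - Phi ((x + q*v)/(σ*Real.sqrt v)))) hS ?_ hint ?_ ?_
    · -- derivative
      intro u hu
      have hu0 : 0 < u := hu.1
      have hsu : 0 < Real.sqrt u := Real.sqrt_pos.2 hu0
      have hd1 := (hasDerivAt_Phi ((x + -q*u)/(σ*Real.sqrt u))).comp u (hasDerivAt_g σ x (-q) u hσ hu0)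
      have hd2 := (hasDerivAt_Phi ((x + q*u)/(σ*Real.sqrt u))).comp u (hasDerivAt_g σ x q u hσ hu0)
      have hF' := ((hd1.const_sub 1).const_mul (Real.exp (-x*(m+q)/σ^2))).add
        ((hd2.const_sub 1).const_mul (Real.exp (-x*(m-q)/σ^2)))
      convert hF' using 1
      · rfl
      have key1 : Real.exp (-x*(m+q)/σ^2) * phi ((x + -q*u)/(σ*Real.sqrt u))
          = Real.exp (-r*u) * phi ((x + m*u)/(σ*Real.sqrt u)) := by
        have := exp_key m σ r x (-q) u hσ hu0 hqn2
        simpa [sub_neg_eq_add] using this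
      have key2 : Real.exp (-x*(m-q)/σ^2) * phi ((x + q*u)/(σ*Real.sqrt u))
          = Real.exp (-r*u) * phi ((x + m*u)/(σ*Real.sqrt u)) := by
        exact exp_key m σ r x q u hσ hu0 hq2
      have h32 : u ^ ((3:ℝ)/2) = u * Real.sqrt u := by
        rw [show ((3:ℝ)/2) = 1 + 1/2 by norm_num, Real.rpow_add hu0, Real.rpow_one,
          ← Real.sqrt_eq_rpow]
      have hsum : (-q*u - x)/(2*σ*(u*Real.sqrt u)) + (q*u - x)/(2*σ*(u*Real.sqrt u))
          = -(x/(σ*(u*Real.sqrt u))) := by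
        rw [← add_div]
        field_simp
        ring
      rw [h32]
      linear_combination ((-q*u - x)/(2*σ*(u*Real.sqrt u))) * key1
        + ((q*u - x)/(2*σ*(u*Real.sqrt u))) * key2
        + (Real.exp (-r*u) * phi ((x + m*u)/(σ*Real.sqrt u))) * hsum
    · -- tendsto at 0
      have h1 := tendsto_Phi_atTop.comp (tendsto_arg_atTop σ x (-q) hσ hx)
      have h2 := tendsto_Phi_atTop.comp (tendsto_arg_atTop σ x q hσ hx)
      have := (((tendsto_const_nhds (x := (1:ℝ))).sub h1).const_mul (Real.exp (-x*(m+q)/σ^2))).add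
        (((tendsto_const_nhds (x := (1:ℝ))).sub h2).const_mul (Real.exp (-x*(m-q)/σ^2)))
      simpa using this
    · -- tendsto at S
      apply Filter.Tendsto.mono_left _ nhdsWithin_le_nhds
      apply ContinuousAt.tendsto
      have hsS : 0 < Real.sqrt S := Real.sqrt_pos.2 hS
      have hc : ∀ c : ℝ, ContinuousAt (fun v => Phi ((x + c*v)/(σ*Real.sqrt v))) S := by
        intro c
        apply (hasDerivAt_Phi _).continuousAt.comp
        apply ContinuousAt.div
        · fun_prop
        · fun_prop
        · positivity
      exact ((continuousAt_const.sub (hc (-q))).const_mul _).add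
        ((continuousAt_const.sub (hc q)).const_mul _)
  rw [hFTC, sub_zero]
  ring_nf
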